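/- Let r ≥ 1 and let R = Z_{2^r} + uZ_{2^r} (dual numbers over Z/2^rZ, u² = 0). For every real number Γ ≥ 0, the function w : R → ℝ defined by w(x) = 0 if x = 0, w(x) = 2Γ if x = 2^{r−1}u, and w(x) = Γ otherwise, is a homogeneous weight on R with average value Γ. -/

import Mathlib

/-- A weight function `w : R → ℝ` on a finite commutative ring is *homogeneous with
average value `Γ`* if (i) `w` is constant on generators of the same principal ideal, and
(ii) for every nonzero `x`, the sum of `w` over the principal ideal `Rx` equals
`Γ` times the cardinality of `Rx`. -/
def IsHomogeneousWeight {R : Type*} [CommRing R] [Finite R] (w : R → ℝ) (Γ : ℝ) : Prop :=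
  (∀ x y : R, Ideal.span {x} = Ideal.span {y} → w x = w y) ∧
  (∀ x : R, x ≠ 0 →
    ∑ᶠ y ∈ (Ideal.span {x} : Ideal R) , w y =
      Γ * (Nat.card (Ideal.span {x} : Ideal R) : ℝ))

instance (r : ℕ) : Finite (DualNumber (ZMod (2 ^ r))) :=
  inferInstanceAs (Finite (ZMod (2 ^ r) × ZMod (2 ^ r)))

open TrivSqZeroExt DualNumber

section Aux

/-- In `ZMod (2^r)`, every nonzero element divides `2^(r-1)`. -/
lemma zmod_exists_mul_eq_pow (r : ℕ) (a : ZMod (2^r)) (ha : a ≠ 0) :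
    ∃ c, c * a = 2^(r-1) := by
  have hpos : 0 < 2^r := Nat.pow_pos (by norm_num : 0 < 2)
  have hNZ : NeZero (2^r) := ⟨hpos.ne'⟩
  have hval : ((a.val : ℕ) : ZMod (2^r)) = a := (ZMod.natCast_val a).trans (ZMod.cast_id _ a)
  have hvne : a.val ≠ 0 := fun h => ha (by rw [← hval, h, Nat.cast_zero])
  obtain ⟨k, m, hm, hkm⟩ := Nat.exists_eq_pow_mul_and_not_dvd hvne 2 (by norm_num)
  have hklt : k < r := by
    by_contra h
    push_neg at h
    have : 2^r ≤ a.val := le_trans (Nat.pow_le_pow_right (by norm_num) h)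
      (by calc 2^k ≤ 2^k * m := Nat.le_mul_of_pos_right _ (Nat.pos_of_ne_zero (by rintro rfl; simp at hkm ⊢; omega))
            _ = a.val := hkm.symm)
    exact absurd (a.val_lt) (not_lt.mpr this)
  have hmu : IsUnit ((m : ZMod (2^r))) := by
    rw [ZMod.isUnit_iff_coprime]
    rw [Nat.dvd_iff_mod_eq_zero] at hm
    exact Nat.Coprime.pow_right r (Nat.coprime_two_right.mpr (Nat.odd_iff.mpr (by omega)))
  refine ⟨2^(r-1-k) * ((m : ZMod (2^r)))⁻¹, ?_⟩
  have ha2 : a = 2^k * (m : ZMod (2^r)) := by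
    rw [← hval, hkm]; push_cast; ring
  rw [ha2]
  have : ((m : ZMod (2^r)))⁻¹ * (m : ZMod (2^r)) = 1 := ZMod.inv_mul_of_unit _ hmu
  calc 2^(r-1-k) * ((m : ZMod (2^r)))⁻¹ * (2^k * (m : ZMod (2^r)))
      = 2^(r-1-k) * 2^k * (((m : ZMod (2^r)))⁻¹ * (m : ZMod (2^r))) := by ring
    _ = 2^(r-1-k+k) := by rw [this, pow_add]; ring
    _ = 2^(r-1) := by congr 1; omega

/-- In `ZMod (2^r)`, multiples of `2^(r-1)` are `0` or `2^(r-1)`. -/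
lemma zmod_mul_pow_cases (r : ℕ) (hr : 1 ≤ r) (c : ZMod (2^r)) :
    c * 2^(r-1) = 0 ∨ c * 2^(r-1) = 2^(r-1) := by
  have hNZ : NeZero (2^r) := ⟨(Nat.pow_pos (by norm_num : 0 < 2)).ne'⟩
  have h2r : (2 : ZMod (2^r))^r = 0 := by
    have := ZMod.natCast_self (2^r)
    push_cast at this
    exact this
  have hval : ((c.val : ℕ) : ZMod (2^r)) = c := (ZMod.natCast_val c).trans (ZMod.cast_id _ c)
  rcases Nat.even_or_odd c.val with ⟨t, ht⟩ | ⟨t, ht⟩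
  · left
    rw [← hval, ht]
    push_cast
    have : ((t:ZMod (2^r)) + t) * 2^(r-1) = t * 2^r := by
      rw [show ((t:ZMod (2^r)) + t) * 2^(r-1) = t * (2^(r-1) * 2) by ring, ← pow_succ,
        show r - 1 + 1 = r by omega]
    rw [this, h2r, mul_zero]
  · right
    rw [← hval, ht]
    push_cast
    have h1 : ((2:ZMod (2^r)) * t) * 2^(r-1) = t * 2^r := by
      rw [show (2:ZMod (2^r)) * t * 2^(r-1) = t * (2^(r-1) * 2) by ring, ← pow_succ,
        show r - 1 + 1 = r by omega]
    rw [add_mul, h1, h2r, mul_zero, zero_add, one_mul]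

lemma hm_fst (r : ℕ) : ((2 ^ (r - 1) : DualNumber (ZMod (2^r))) * eps).fst = 0 := by simp

lemma hm_snd (r : ℕ) :
    ((2 ^ (r - 1) : DualNumber (ZMod (2^r))) * eps).snd = 2^(r-1) := by
  simp [fst_pow]
  rfl

lemma m_ne_zero (r : ℕ) (hr : 1 ≤ r) :
    (2 ^ (r - 1) : DualNumber (ZMod (2^r))) * eps ≠ 0 := by
  have hNZ : NeZero (2^r) := ⟨(Nat.pow_pos (by norm_num : 0 < 2)).ne'⟩
  intro h
  have := congrArg TrivSqZeroExt.snd h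
  rw [hm_snd] at this
  have h2 : ((2^(r-1) : ℕ) : ZMod (2^r)) = 0 := by push_cast at this ⊢; exact this
  rw [ZMod.natCast_eq_zero_iff] at h2
  exact absurd (Nat.le_of_dvd (Nat.pow_pos (by norm_num : 0 < 2)) h2)
    (not_le.mpr (Nat.pow_lt_pow_right (by norm_num) (by omega)))

lemma m_mem_span (r : ℕ) (hr : 1 ≤ r) (x : DualNumber (ZMod (2^r))) (hx : x ≠ 0) :
    (2 ^ (r - 1) : DualNumber (ZMod (2^r))) * eps ∈ Ideal.span {x} := by
  rw [Ideal.mem_span_singleton']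
  by_cases hf : x.fst = 0
  · have hs : x.snd ≠ 0 := by
      intro h; exact hx (TrivSqZeroExt.ext hf h)
    obtain ⟨c, hc⟩ := zmod_exists_mul_eq_pow r x.snd hs
    refine ⟨inl c, TrivSqZeroExt.ext ?_ ?_⟩
    · simp [hf, hm_fst]
    · rw [hm_snd]
      rw [TrivSqZeroExt.snd_mul]
      simp [hf, hc, smul_eq_mul]
  · obtain ⟨c, hc⟩ := zmod_exists_mul_eq_pow r x.fst hf
    refine ⟨inl c * eps, TrivSqZeroExt.ext ?_ ?_⟩
    · simp [hm_fst]
    · rw [hm_snd]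
      simp [TrivSqZeroExt.snd_mul, smul_eq_mul]
      exact hc

lemma mem_span_m (r : ℕ) (hr : 1 ≤ r) (z : DualNumber (ZMod (2^r)))
    (hz : z ∈ Ideal.span ({(2 ^ (r - 1) : DualNumber (ZMod (2^r))) * eps} :
      Set (DualNumber (ZMod (2^r))))) :
    z = 0 ∨ z = (2 ^ (r - 1) : DualNumber (ZMod (2^r))) * eps := by
  rw [Ideal.mem_span_singleton'] at hz
  obtain ⟨a, ha⟩ := hz
  have hfst : z.fst = 0 := by
    rw [← ha, TrivSqZeroExt.fst_mul, hm_fst, mul_zero]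
  have hsnd : z.snd = a.fst * 2^(r-1) := by
    rw [← ha, TrivSqZeroExt.snd_mul, hm_fst, hm_snd]
    simp [smul_eq_mul]
  rcases zmod_mul_pow_cases r hr a.fst with h | h
  · left; exact TrivSqZeroExt.ext hfst (by rw [hsnd, h]; rfl)
  · right; exact TrivSqZeroExt.ext (by rw [hfst, hm_fst]) (by rw [hsnd, h, hm_snd])

end Aux

open scoped Classical in
/-- For `r ≥ 1`, `R = Z_{2^r} + uZ_{2^r}` and every `Γ ≥ 0`, the function given by
`w 0 = 0`, `w (2^{r-1}u) = 2Γ` and `w x = Γ` otherwise is a homogeneous weight on `R`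
with average value `Γ`. -/
theorem z2ru_homogeneous_weight (r : ℕ) (hr : 1 ≤ r) (Γ : ℝ) (hΓ : 0 ≤ Γ) :
    IsHomogeneousWeight
      (fun x : DualNumber (ZMod (2 ^ r)) =>
        if x = 0 then 0
        else if x = (2 ^ (r - 1) : DualNumber (ZMod (2 ^ r))) * DualNumber.eps then 2 * Γ
        else Γ) Γ := by
  obtain ⟨m, hmdef⟩ : ∃ m, m = (2 ^ (r - 1) : DualNumber (ZMod (2 ^ r))) * DualNumber.eps :=
    ⟨_, rfl⟩
  have hmne : m ≠ 0 := by rw [hmdef]; exact m_ne_zero r hr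
  have hmem : ∀ x : DualNumber (ZMod (2 ^ r)), x ≠ 0 → m ∈ Ideal.span {x} := by
    intro x hx; rw [hmdef]; exact m_mem_span r hr x hx
  have hspan : ∀ z : DualNumber (ZMod (2 ^ r)),
      z ∈ Ideal.span ({m} : Set (DualNumber (ZMod (2 ^ r)))) → z = 0 ∨ z = m := by
    intro z hz
    rw [hmdef] at hz ⊢
    exact mem_span_m r hr z hz
  rw [← hmdef]
  clear hmdef
  constructor
  · intro x y h
    have e0 : x = 0 ↔ y = 0 := by
      constructor <;> intro h' <;> subst h'
      · exact (Ideal.span_singleton_eq_bot.mp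
          (h.symm.trans (Ideal.span_singleton_eq_bot.mpr rfl)))
      · exact (Ideal.span_singleton_eq_bot.mp
          (h.trans (Ideal.span_singleton_eq_bot.mpr rfl)))
    have em : x = m ↔ y = m := by
      constructor <;> intro h' <;> subst h'
      · rcases hspan y (by rw [h]; exact Ideal.subset_span rfl) with h0 | hm'
        · exfalso
          subst h0
          exact hmne (Ideal.span_singleton_eq_bot.mp
            (h.trans (Ideal.span_singleton_eq_bot.mpr rfl)))
        · exact hm'
      · rcases hspan x (by rw [← h]; exact Ideal.subset_span rfl) with h0 | hm'
        · exfalso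
          subst h0
          exact hmne (Ideal.span_singleton_eq_bot.mp
            (h.symm.trans (Ideal.span_singleton_eq_bot.mpr rfl)))
        · exact hm'
    by_cases h0 : x = 0
    · simp [h0, e0.mp h0]
    · have hy0 : y ≠ 0 := fun hy => h0 (e0.mpr hy)
      by_cases hm1 : x = m
      · simp [h0, hm1, hy0, em.mp hm1]
      · have hym : y ≠ m := fun hy => hm1 (em.mpr hy)
        simp [h0, hm1, hy0, hym]
  · intro x hx
    have hmmem : m ∈ Ideal.span {x} := hmem x hx
    have h0mem : (0 : DualNumber (ZMod (2 ^ r))) ∈ Ideal.span {x} :=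
      Ideal.zero_mem _
    have hfin : (↑(Ideal.span {x} : Ideal (DualNumber (ZMod (2 ^ r)))) :
        Set (DualNumber (ZMod (2 ^ r)))).Finite := Set.toFinite _
    set S := hfin.toFinset with hS
    have h0S : (0 : DualNumber (ZMod (2 ^ r))) ∈ S := by
      rw [hS, Set.Finite.mem_toFinset]; exact h0mem
    have hmS : m ∈ S := by
      rw [hS, Set.Finite.mem_toFinset]; exact hmmem
    have hsumeq : ∑ᶠ y ∈ (Ideal.span {x} : Ideal (DualNumber (ZMod (2 ^ r)))),
        (if y = 0 then (0:ℝ) else if y = m then 2 * Γ else Γ) =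
        ∑ y ∈ S, (if y = 0 then (0:ℝ) else if y = m then 2 * Γ else Γ) := by
      rw [hS, ← finsum_mem_coe_finset, Set.Finite.coe_toFinset]
      rfl
    have hcard : (Nat.card (Ideal.span {x} : Ideal (DualNumber (ZMod (2 ^ r)))) : ℝ)
        = (S.card : ℝ) := by
      norm_cast
      rw [show Nat.card (Ideal.span {x} : Ideal (DualNumber (ZMod (2 ^ r))))
            = Nat.card (↑(Ideal.span {x} : Ideal (DualNumber (ZMod (2 ^ r)))) :
              Set (DualNumber (ZMod (2 ^ r)))) from rfl,
        Nat.card_coe_set_eq, Set.ncard_eq_toFinset_card _ hfin]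
    simp only []
    rw [hsumeq, hcard]
    have hstep : ∀ y ∈ S, (if y = 0 then (0:ℝ) else if y = m then 2 * Γ else Γ)
        = Γ + ((if y = 0 then -Γ else 0) + (if y = m then Γ else 0)) := by
      intro y _
      by_cases h0 : y = 0
      · subst h0; simp [Ne.symm hmne]
      · by_cases hm1 : y = m
        · subst hm1
          simp [hmne, two_mul]
        · simp [h0, hm1]
    rw [Finset.sum_congr rfl hstep, Finset.sum_add_distrib, Finset.sum_add_distrib,
      Finset.sum_const, Finset.sum_ite_eq' S 0 (fun _ => -Γ),
      Finset.sum_ite_eq' S m (fun _ => Γ), if_pos h0S, if_pos hmS]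
    push_cast
    ring
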